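/- Let F be the free group on two generators a and b, and let M = ℚ⟦X⟧ with a acting as multiplication by exp(X) and b acting as the identity. The function c : F → M determined by the cocycle conditions with c(a) = 0 and c(b) = 1 is a 1-cocycle whose class in H¹(F, M) is nonzero; equivalently, the extension of F-representations 0 → M → E → ℚ → 0, where E = ℚ·v ⊕ M with a·v = v and b·v = v + 1 (and the given action on M), does not split. (This extension of local systems is the one underlying the polylogarithm pol, which is therefore nontrivial.) -/

import Mathlib

open PowerSeries

/-- `exp X = ∑_{n ≥ 0} Xⁿ/n!` as a unit of `ℚ⟦X⟧`. -/
noncomputable def expUnit : (PowerSeries ℚ)ˣ :=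
  (show IsUnit (PowerSeries.exp ℚ) from
    PowerSeries.isUnit_iff_constantCoeff.mpr
      (by rw [PowerSeries.constantCoeff_exp]; exact isUnit_one)).unit

/-- The homomorphism from the free group on two generators `a = of true`, `b = of false`
to units of `ℚ⟦X⟧`, sending `a` to `exp X` and `b` to `1`. -/
noncomputable def freeGroupToUnits : FreeGroup Bool →* (PowerSeries ℚ)ˣ :=
  FreeGroup.lift (fun b => if b then expUnit else 1)

/-- The representation of the free group on two generators on `M = ℚ⟦X⟧`, where
`a = of true` acts as multiplication by `exp X` and `b = of false` acts as the identity. -/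
noncomputable def logRep : Representation ℚ (FreeGroup Bool) (PowerSeries ℚ) :=
  ((Algebra.lmul ℚ (PowerSeries ℚ)).toRingHom.toMonoidHom.comp
    (Units.coeHom (PowerSeries ℚ))).comp freeGroupToUnits

lemma lift_pure {G : Type*} [Group G] (f : Bool → G) (b : Bool) :
    FreeGroup.lift f (pure b) = f b := FreeGroup.lift_apply_of

lemma logRep_apply (g : FreeGroup Bool) (x : PowerSeries ℚ) :
    logRep g x = (freeGroupToUnits g : PowerSeries ℚ) * x := rfl

noncomputable def affPerm : FreeGroup Bool →* Equiv.Perm (PowerSeries ℚ) :=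
  FreeGroup.lift (fun b => if b then Units.mulLeft expUnit else Equiv.addRight 1)

lemma affPerm_affine (g : FreeGroup Bool) (x : PowerSeries ℚ) :
    affPerm g x = (freeGroupToUnits g : PowerSeries ℚ) * x + affPerm g 0 := by
  induction g using FreeGroup.induction_on generalizing x with
  | C1 => simp
  | of b =>
    cases b <;>
      simp [affPerm, freeGroupToUnits, lift_pure, Units.mulLeft, Equiv.addRight]
  | inv_of b hb =>
    set u := freeGroupToUnits (FreeGroup.of b) with hu
    have key : ∀ y, affPerm (FreeGroup.of b)⁻¹ y =
        (↑u⁻¹ : PowerSeries ℚ) * (y - affPerm (FreeGroup.of b) 0) := by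
      intro y
      have h1 : affPerm (FreeGroup.of b) (affPerm (FreeGroup.of b)⁻¹ y) = y := by
        rw [← Equiv.Perm.mul_apply, ← map_mul]; simp
      rw [hb] at h1
      have h2 : (↑u : PowerSeries ℚ) * affPerm (FreeGroup.of b)⁻¹ y
          = y - affPerm (FreeGroup.of b) 0 := by linear_combination h1
      calc affPerm (FreeGroup.of b)⁻¹ y
          = (↑u⁻¹ : PowerSeries ℚ) * ((↑u : PowerSeries ℚ) * affPerm (FreeGroup.of b)⁻¹ y) := by
            rw [← mul_assoc, ← Units.val_mul, inv_mul_cancel, Units.val_one, one_mul]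
        _ = _ := by rw [h2]
    rw [key x, key 0, map_inv]
    ring
  | mul g h hg hh =>
    simp only [map_mul, Equiv.Perm.mul_apply, Units.val_mul]
    rw [hh x, hg, hg (affPerm h 0)]
    ring

/-- There is a 1-cocycle `c : F → ℚ⟦X⟧` for the above action of the free group `F` on two
generators with `c(a) = 0` and `c(b) = 1`; and any such cocycle is not a coboundary, i.e.
its class in `H¹(F, M)` is nonzero (equivalently, the corresponding extension
`0 → M → E → ℚ → 0` of `F`-representations does not split). -/
theorem polylog_cocycle_exists_and_nontrivial :
    (∃ c : FreeGroup Bool → PowerSeries ℚ,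
      (∀ g h : FreeGroup Bool, c (g * h) = c g + logRep g (c h)) ∧
      c (FreeGroup.of true) = 0 ∧ c (FreeGroup.of false) = 1) ∧
    (∀ c : FreeGroup Bool → PowerSeries ℚ,
      (∀ g h : FreeGroup Bool, c (g * h) = c g + logRep g (c h)) →
      c (FreeGroup.of true) = 0 → c (FreeGroup.of false) = 1 →
      ¬ ∃ m : PowerSeries ℚ, ∀ g : FreeGroup Bool, c g = logRep g m - m) := by
  constructor
  · refine ⟨fun g => affPerm g 0, fun g h => ?_, ?_, ?_⟩
    · show affPerm (g * h) 0 = affPerm g 0 + logRep g (affPerm h 0)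
      rw [map_mul, Equiv.Perm.mul_apply, affPerm_affine g, logRep_apply, add_comm]
    · simp [affPerm, lift_pure, Units.mulLeft]
    · simp [affPerm, lift_pure, Equiv.addRight]
  · rintro c hc ha hb ⟨m, hm⟩
    have h1 : (freeGroupToUnits (FreeGroup.of true) : PowerSeries ℚ) = PowerSeries.exp ℚ := by
      simp [freeGroupToUnits, lift_pure, expUnit]
    have h2 : (freeGroupToUnits (FreeGroup.of false) : PowerSeries ℚ) = 1 := by
      simp [freeGroupToUnits, lift_pure]
    have hma := hm (FreeGroup.of true)
    rw [ha, logRep_apply, h1] at hma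
    have : (PowerSeries.exp ℚ - 1) * m = 0 := by linear_combination -hma
    have hexp : PowerSeries.exp ℚ - 1 ≠ 0 := by
      intro h
      have := congrArg (PowerSeries.coeff 1) h
      simp [PowerSeries.coeff_exp] at this
    have hm0 : m = 0 := by
      rcases mul_eq_zero.mp this with h | h
      · exact absurd h hexp
      · exact h
    have hmb := hm (FreeGroup.of false)
    rw [hb, logRep_apply, h2, hm0] at hmb
    simp at hmb
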